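/- If g_n < ln(p_n)^2 - ln(p_n) - 1 for all n ≥ 10 and p_n < n^2 for all n ≥ 2, then g_n < √n for all n ≥ 411781. -/

import Mathlib

/-- `p n` is the `n`-th prime number (`p 1 = 2`, `p 2 = 3`, ...). -/
noncomputable def p (n : ℕ) : ℕ := Nat.nth Nat.Prime (n - 1)

/-- `g n = p (n+1) - p n` is the `n`-th prime gap. -/
noncomputable def g (n : ℕ) : ℕ := p (n + 1) - p n

lemma log642_le : Real.log 642 ≤ 6.46553 := by
  have h2 : Real.log 642 = 9 * Real.log 2 + Real.log (642 / 512) := by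
    rw [show (642 : ℝ) = 2 ^ 9 * (642 / 512) by norm_num,
      Real.log_mul (by positivity) (by norm_num), Real.log_pow]
    push_cast; ring
  have h3 : Real.log (642 / 512 : ℝ) ≤ Real.log ((10071 / 10000 : ℝ) ^ 32) :=
    Real.log_le_log (by norm_num) (by norm_num)
  have h4 : Real.log ((10071 / 10000 : ℝ) ^ 32) = 32 * Real.log (10071 / 10000) := by
    rw [Real.log_pow]; push_cast; ring
  have h5 : Real.log (10071 / 10000 : ℝ) ≤ 10071 / 10000 - 1 :=
    Real.log_le_sub_one_of_pos (by norm_num)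
  have h6 : Real.log 2 < 0.6931471808 := Real.log_two_lt_d9
  rw [h2]
  nlinarith [h3, h4, h5, h6]

lemma key : ∀ m : ℕ, 642 ≤ m → 16 * Real.log m ^ 2 - 4 * Real.log m - 1 ≤ m := by
  intro m hm
  induction m, hm using Nat.le_induction with
  | base =>
      have hL0 : (0:ℝ) ≤ Real.log 642 := Real.log_nonneg (by norm_num)
      have hL := log642_le
      push_cast
      nlinarith [hL, hL0]
  | succ m hm ih =>
      set A := Real.log ((m : ℝ) + 1) with hA
      set B := Real.log (m : ℝ) with hB
      have hm0 : (0:ℝ) < m := by positivity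
      have hm642 : (642:ℝ) ≤ m := by exact_mod_cast hm
      have hBA : B ≤ A := Real.log_le_log hm0 (by linarith)
      have hB0 : (0:ℝ) ≤ B := Real.log_nonneg (by linarith)
      have hB1 : (1:ℝ) ≤ B := by
        have : Real.log (Real.exp 1) ≤ B := by
          apply Real.log_le_log (Real.exp_pos 1)
          have := Real.exp_one_lt_d9
          linarith
        rwa [Real.log_exp] at this
      have hd : A - B ≤ 1 / m := by
        have h : A - B = Real.log (((m:ℝ) + 1) / m) := by
          rw [Real.log_div (by positivity) (by positivity)]
        have h2 : Real.log (((m:ℝ) + 1) / m) ≤ ((m:ℝ) + 1) / m - 1 :=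
          Real.log_le_sub_one_of_pos (by positivity)
        have h3 : ((m:ℝ) + 1) / m - 1 = 1 / m := by field_simp; ring
        rw [h]; rw [h3] at h2; exact h2
      have hAup : A ≤ ((m:ℝ) + 1) / 256 - 1 + 8 * 0.6931471808 := by
        have h : A = Real.log (((m:ℝ) + 1) / 256) + 8 * Real.log 2 := by
          rw [hA, show ((m:ℝ) + 1) = ((m:ℝ) + 1) / 256 * 2 ^ 8 by ring,
            Real.log_mul (by positivity) (by positivity), Real.log_pow]
          push_cast; ring
        have h2 : Real.log (((m:ℝ) + 1) / 256) ≤ ((m:ℝ) + 1) / 256 - 1 :=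
          Real.log_le_sub_one_of_pos (by positivity)
        have h6 : Real.log 2 < 0.6931471808 := Real.log_two_lt_d9
        rw [h]; nlinarith
      have hcast : Real.log ((m : ℕ) + 1 : ℕ) = A := by push_cast; rfl
      push_cast
      have hstep : (A - B) * (16 * (A + B) - 4) ≤ 1 := by
        have hpos : (0:ℝ) ≤ 16 * (A + B) - 4 := by nlinarith
        have h1 : (A - B) * (16 * (A + B) - 4) ≤ (1 / m) * (16 * (A + B) - 4) :=
          mul_le_mul_of_nonneg_right hd hpos
        have h2 : (1 / (m:ℝ)) * (16 * (A + B) - 4) ≤ (1 / m) * m := by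
          apply mul_le_mul_of_nonneg_left _ (by positivity)
          nlinarith
        have h3 : (1 / (m:ℝ)) * m = 1 := by field_simp
        linarith
      nlinarith [ih, hstep]

theorem gap_lt_sqrt
    (h1 : ∀ n : ℕ, 10 ≤ n → (g n : ℝ) < Real.log (p n) ^ 2 - Real.log (p n) - 1)
    (h2 : ∀ n : ℕ, 2 ≤ n → p n < n ^ 2) :
    ∀ n : ℕ, 411781 ≤ n → (g n : ℝ) < Real.sqrt n := by
  intro n hn
  have hgap := h1 n (by omega)
  have hp2 : 2 ≤ p n := (Nat.prime_nth_prime (n - 1)).two_le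
  have hpn : (p n : ℝ) ≤ (n : ℝ) ^ 2 := by exact_mod_cast (h2 n (by omega)).le
  set L := Real.log (p n) with hL
  have hp0 : (0:ℝ) < p n := by exact_mod_cast Nat.lt_of_lt_of_le (by norm_num) hp2
  have hL1 : (1:ℝ) / 2 ≤ L := by
    have h := Real.log_le_log (show (0:ℝ) < 2 by norm_num)
      (show (2:ℝ) ≤ (p n : ℝ) by exact_mod_cast hp2)
    have := Real.log_two_gt_d9
    linarith
  have hLn : L ≤ 2 * Real.log n := by
    have h := Real.log_le_log hp0 hpn
    rwa [Real.log_pow, Nat.cast_ofNat] at h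
  -- monotone bound: g n < (2 log n)^2 - 2 log n - 1
  have hgap2 : (g n : ℝ) < (2 * Real.log n) ^ 2 - 2 * Real.log n - 1 := by
    nlinarith [hgap, hL1, hLn]
  set m := Nat.sqrt n with hm
  have hm641 : 641 ≤ m := by
    rw [hm]
    have : 641 * 641 ≤ n := by omega
    exact (Nat.le_sqrt.mpr this)
  have hmn : m ^ 2 ≤ n := Nat.sqrt_le' n
  have hnm : n < (m + 1) ^ 2 := Nat.lt_succ_sqrt' n
  rcases eq_or_lt_of_le hmn with heq | hlt
  · -- n = m^2
    have hm642 : 642 ≤ m := by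
      rcases Nat.lt_or_ge m 642 with h | h
      · exfalso
        have h9 : m ^ 2 ≤ 641 ^ 2 := Nat.pow_le_pow_left (by omega) 2
        omega
      · exact h
    have hc2 : ((m ^ 2 : ℕ) : ℝ) = ((m:ℝ)) ^ 2 := by push_cast; ring
    have hlogn : Real.log n = 2 * Real.log m := by
      rw [← heq, hc2, Real.log_pow]
      norm_num
    have hkey := key m hm642
    have hsq : Real.sqrt n = m := by
      rw [← heq, hc2]
      exact Real.sqrt_sq (by positivity)
    rw [hsq]
    rw [hlogn] at hgap2
    nlinarith [hgap2, hkey]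
  · -- m^2 < n
    have hkey := key (m + 1) (by omega)
    have hlogn : Real.log n ≤ 2 * Real.log (m + 1) := by
      have h : (n : ℝ) ≤ ((m:ℝ) + 1) ^ 2 := by
        exact_mod_cast hnm.le
      have := Real.log_le_log (by positivity : (0:ℝ) < n) h
      rwa [show ((m:ℝ) + 1) ^ 2 = ((m:ℝ)+1)^(2:ℕ) by norm_num, Real.log_pow] at this
    have hlogm1 : Real.log ((m + 1 : ℕ) : ℝ) = Real.log ((m:ℝ) + 1) := by push_cast; rfl
    rw [hlogm1] at hkey
    have hn1 : (1:ℕ) ≤ n := by omega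
    have hlog0 : (0:ℝ) ≤ Real.log n := Real.log_nonneg (by exact_mod_cast hn1)
    have hm0 : (0:ℝ) ≤ (m:ℝ) := Nat.cast_nonneg m
    have hlogm0 : (0:ℝ) ≤ Real.log ((m:ℝ) + 1) := Real.log_nonneg (by linarith)
    have hx : (1:ℝ) / 4 ≤ Real.log n := by linarith
    have hprod : (0:ℝ) ≤ (4 * Real.log ((m:ℝ)+1) - 2 * Real.log n)
        * (4 * Real.log ((m:ℝ)+1) + 2 * Real.log n - 1) :=
      mul_nonneg (by linarith) (by linarith)
    have hgn : (g n : ℝ) < (m:ℝ) + 1 := by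
      push_cast at hkey
      nlinarith [hgap2, hkey, hprod]
    have hgn' : g n ≤ m := by
      have : (g n : ℝ) < ((m + 1 : ℕ) : ℝ) := by push_cast; linarith
      exact Nat.lt_succ_iff.mp (by exact_mod_cast this)
    have hmsqrt : (m : ℝ) < Real.sqrt n := by
      rw [show (m:ℝ) = Real.sqrt ((m:ℝ)^2) by rw [Real.sqrt_sq (by positivity)]]
      apply Real.sqrt_lt_sqrt (by positivity)
      exact_mod_cast hlt
    calc (g n : ℝ) ≤ m := by exact_mod_cast hgn'
      _ < Real.sqrt n := hmsqrt
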